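/- arXiv:1302.3613 — 10 statements merged into one kernel-verified Lean document; each statement's English description precedes it below -/
import Mathlib

section
/- The limit as x tends to 0 of Γ(x) - 1/x equals -γ, where γ is the Euler–Mascheroni constant. -/
theorem stmt_0 :
    Filter.Tendsto (fun x : ℝ => Real.Gamma x - 1 / x) (nhdsWithin 0 {0}ᶜ)
      (nhds (-Real.eulerMascheroniConstant)) := by
  have h := Real.hasDerivAt_Gamma_one
  rw [hasDerivAt_iff_tendsto_slope] at h
  have hmap : Filter.Tendsto (fun x : ℝ => 1 + x) (nhdsWithin 0 {0}ᶜ)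
      (nhdsWithin 1 {1}ᶜ) := by
    rw [tendsto_nhdsWithin_iff]
    constructor
    · have : Filter.Tendsto (fun x : ℝ => 1 + x) (nhds 0) (nhds 1) := by
        simpa using (continuous_add_left (1:ℝ)).tendsto (0:ℝ)
      exact this.mono_left nhdsWithin_le_nhds
    · filter_upwards [self_mem_nhdsWithin] with x hx
      simp only [Set.mem_compl_iff, Set.mem_singleton_iff] at hx ⊢
      intro h'; exact hx (by linarith)
  have h2 := h.comp hmap
  refine h2.congr' ?_
  filter_upwards [self_mem_nhdsWithin] with x hx
  simp only [Set.mem_compl_iff, Set.mem_singleton_iff] at hx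
  have : Real.Gamma (1 + x) = x * Real.Gamma x := by
    rw [add_comm, Real.Gamma_add_one hx]
  simp only [Function.comp, slope_def_field, Real.Gamma_one]
  rw [this]
  field_simp
  rw [add_sub_cancel_left, mul_div_cancel_left₀ _ hx]
end

section
/- The limit as x tends to infinity of x - Γ(1/x) equals γ. -/
theorem stmt_1 :
    Filter.Tendsto (fun x : ℝ => x - Real.Gamma (1 / x)) Filter.atTop
      (nhds Real.eulerMascheroniConstant) := by
  have hdiff : DifferentiableAt ℝ Real.Gamma 1 := by
    apply Real.differentiableAt_Gamma
    intro m h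
    have : (0:ℝ) ≤ m := Nat.cast_nonneg m
    linarith
  have hderiv : HasDerivAt Real.Gamma (-Real.eulerMascheroniConstant) 1 := by
    have := hdiff.hasDerivAt
    rwa [show deriv Real.Gamma 1 = -Real.eulerMascheroniConstant by
      rw [Real.eulerMascheroniConstant_eq_neg_deriv]; ring] at this
  have hslope := hasDerivAt_iff_tendsto_slope.mp hderiv
  -- the map x ↦ 1 + 1/x tends to 𝓝[≠] 1
  have hmap : Filter.Tendsto (fun x : ℝ => 1 + 1 / x) Filter.atTop (nhdsWithin 1 {1}ᶜ) := by
    rw [tendsto_nhdsWithin_iff]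
    constructor
    · have : Filter.Tendsto (fun x : ℝ => 1 / x) Filter.atTop (nhds 0) :=
        by simpa [one_div] using tendsto_inv_atTop_zero (𝕜 := ℝ)
      simpa using (tendsto_const_nhds.add this)
    · filter_upwards [Filter.eventually_gt_atTop (0:ℝ)] with x hx
      have : (0:ℝ) < 1 / x := by positivity
      simp only [Set.mem_compl_iff, Set.mem_singleton_iff]
      intro h
      nlinarith
  have key : Filter.Tendsto (fun x : ℝ => -slope Real.Gamma 1 (1 + 1 / x)) Filter.atTop
      (nhds Real.eulerMascheroniConstant) := by
    have := (hslope.comp hmap).neg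
    simpa using this
  refine key.congr' ?_
  filter_upwards [Filter.eventually_gt_atTop (0:ℝ)] with x hx
  have hx0 : (1:ℝ)/x ≠ 0 := by positivity
  have hadd : Real.Gamma (1/x + 1) = (1/x) * Real.Gamma (1/x) := Real.Gamma_add_one hx0
  rw [slope_def_field]
  rw [show (1:ℝ) + 1/x = 1/x + 1 by ring, hadd, Real.Gamma_one]
  field_simp
  ring
end

section
/- The limit as x tends to 0 of 1/x + Γ(-1 + x) equals γ - 1. -/
theorem stmt_2 :
    Filter.Tendsto (fun x : ℝ => 1 / x + Real.Gamma (-1 + x)) (nhdsWithin 0 {0}ᶜ)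
      (nhds (Real.eulerMascheroniConstant - 1)) := by
  set γ := Real.eulerMascheroniConstant
  -- the function g x = x - 1 + Γ(1+x) has derivative 1 - γ at 0 and g 0 = 0
  have hg : HasDerivAt (fun x : ℝ => x - 1 + Real.Gamma (1 + x)) (1 - γ) 0 := by
    have h1 : HasDerivAt (fun x : ℝ => Real.Gamma (1 + x)) (-γ) 0 := by
      have hout : HasDerivAt Real.Gamma (-γ) (1 + (0:ℝ)) := by
        simpa using Real.hasDerivAt_Gamma_one
      have hin : HasDerivAt (fun x : ℝ => 1 + x) 1 0 := by
        simpa using (hasDerivAt_id (0:ℝ)).const_add 1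
      simpa [Function.comp_def] using hout.comp 0 hin
    have h2 : HasDerivAt (fun x : ℝ => x - 1) (1 : ℝ) 0 := by
      simpa using (hasDerivAt_id (0:ℝ)).sub_const 1
    simpa [sub_eq_add_neg, add_comm, Pi.add_def] using h2.add h1
  have hslope : Filter.Tendsto (fun x : ℝ => (x - 1 + Real.Gamma (1 + x)) / x)
      (nhdsWithin 0 {0}ᶜ) (nhds (1 - γ)) := by
    have := hasDerivAt_iff_tendsto_slope.mp hg
    refine this.congr' ?_
    filter_upwards [self_mem_nhdsWithin] with x hx
    simp [slope_def_field, div_eq_inv_mul, Real.Gamma_one]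
  have hinv : Filter.Tendsto (fun x : ℝ => (x - 1)⁻¹) (nhdsWithin 0 {0}ᶜ)
      (nhds (-1 : ℝ)) := by
    have hc : ContinuousAt (fun x : ℝ => (x - 1)⁻¹) 0 :=
      ContinuousAt.inv₀ (by fun_prop) (by norm_num)
    have := hc.tendsto
    norm_num at this
    exact this.mono_left nhdsWithin_le_nhds
  have hmul := hslope.mul hinv
  have hlim : (1 - γ) * (-1 : ℝ) = γ - 1 := by ring
  rw [hlim] at hmul
  refine hmul.congr' ?_
  have hmem : {x : ℝ | |x| < 1} ∈ nhdsWithin (0:ℝ) {0}ᶜ := by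
    apply nhdsWithin_le_nhds
    have : Metric.ball (0:ℝ) 1 ∈ nhds (0:ℝ) := Metric.ball_mem_nhds 0 one_pos
    simpa [Real.ball_eq_Ioo, abs_lt, Set.mem_Ioo, Set.Ioo_def] using this
  filter_upwards [self_mem_nhdsWithin, hmem] with x hx hx1
  have hx0 : x ≠ 0 := hx
  have hx1' : x - 1 ≠ 0 := by
    intro h; rw [sub_eq_zero] at h; rw [h] at hx1; simp at hx1
  have hxm1 : (-1 + x : ℝ) ≠ 0 := by
    intro h; apply hx1'; linarith [h]
  -- Γ(1+x) = x * (x-1) * Γ(-1+x)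
  have e1 : Real.Gamma x = (-1 + x) * Real.Gamma (-1 + x) := by
    have h := Real.Gamma_add_one hxm1
    rw [show (-1 + x + 1 : ℝ) = x by ring] at h
    exact h
  have e2 : Real.Gamma (1 + x) = x * Real.Gamma x := by
    rw [add_comm]; exact Real.Gamma_add_one hx0
  rw [e2, e1]
  field_simp
  ring
end

section
/- The limit as x tends to 0 of -1/(2x) + Γ(-2 + x) equals -γ/2 + 3/4. -/
open Real Filter

theorem stmt_3 :
    Filter.Tendsto (fun x : ℝ => -1 / (2 * x) + Real.Gamma (-2 + x)) (nhdsWithin 0 {0}ᶜ)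
      (nhds (-Real.eulerMascheroniConstant / 2 + 3 / 4)) := by
  set γ := Real.eulerMascheroniConstant
  -- f x = Γ(x+1) - (x-1)(x-2)/2, f 0 = 0, f' 0 = -γ + 3/2
  set f : ℝ → ℝ := fun x => Real.Gamma (x + 1) - (x - 1) * (x - 2) / 2 with hf
  have hd1 : HasDerivAt (fun x : ℝ => Real.Gamma (x + 1)) (-γ) 0 := by
    have h0 : HasDerivAt Real.Gamma (-γ) ((0:ℝ) + 1) := by simpa using Real.hasDerivAt_Gamma_one
    have := h0.comp 0 ((hasDerivAt_id (0:ℝ)).add_const 1)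
    simpa [Function.comp_def] using this
  have hd2 : HasDerivAt (fun x : ℝ => (x - 1) * (x - 2) / 2) (-3/2) 0 := by
    have h1 : HasDerivAt (fun x : ℝ => (x - 1) * (x - 2) / 2)
        (((1 * ((0:ℝ) - 2) + (0 - 1) * 1)) / 2) 0 := by
      exact (((hasDerivAt_id (0:ℝ)).sub_const 1).mul
        ((hasDerivAt_id (0:ℝ)).sub_const 2)).div_const 2
    convert h1 using 1; norm_num
  have hdf : HasDerivAt f (-γ + 3/2) 0 := by
    have := hd1.sub hd2
    have heq : -γ - -3/2 = -γ + 3/2 := by ring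
    rw [heq] at this
    exact this
  have hslope : Tendsto (fun x => f x / x) (nhdsWithin 0 {0}ᶜ) (nhds (-γ + 3/2)) := by
    have := hasDerivAt_iff_tendsto_slope.mp hdf
    refine this.congr (fun x => ?_)
    simp [slope, hf, Real.Gamma_one, div_eq_inv_mul]
  have hcont : Tendsto (fun x : ℝ => 1 / ((x - 1) * (x - 2))) (nhdsWithin 0 {0}ᶜ)
      (nhds (1 / 2)) := by
    have : ContinuousAt (fun x : ℝ => 1 / ((x - 1) * (x - 2))) 0 := by
      apply ContinuousAt.div continuousAt_const (by fun_prop); norm_num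
    simpa using this.continuousWithinAt.tendsto
  have hmul := hslope.mul hcont
  have hval : (-γ + 3/2) * (1/2) = -γ / 2 + 3 / 4 := by ring
  rw [hval] at hmul
  refine hmul.congr' ?_
  have hmem : {x : ℝ | x ∈ Set.Ioo (-1:ℝ) 1 ∧ x ≠ 0} ∈ nhdsWithin (0:ℝ) {0}ᶜ := by
    apply inter_mem
    · exact nhdsWithin_le_nhds (Ioo_mem_nhds (by norm_num) (by norm_num))
    · exact self_mem_nhdsWithin
  filter_upwards [hmem] with x hx
  obtain ⟨⟨hx1, hx2⟩, hx0⟩ := hx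
  have hne2 : (-2 : ℝ) + x ≠ 0 := by intro h; nlinarith
  have hne1 : (-1 : ℝ) + x ≠ 0 := by intro h; nlinarith
  have e1 : Real.Gamma (-1 + x) = (-2 + x) * Real.Gamma (-2 + x) := by
    have := Real.Gamma_add_one hne2; rw [show (-2:ℝ) + x + 1 = -1 + x by ring] at this
    exact this
  have e2 : Real.Gamma x = (-1 + x) * Real.Gamma (-1 + x) := by
    have := Real.Gamma_add_one hne1; rw [show (-1:ℝ) + x + 1 = x by ring] at this
    exact this
  have e3 : Real.Gamma (x + 1) = x * Real.Gamma x := Real.Gamma_add_one hx0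
  have key : Real.Gamma (x + 1) = x * (-1 + x) * (-2 + x) * Real.Gamma (-2 + x) := by
    rw [e3, e2, e1]; ring
  have hx12 : (x - 1) * (x - 2) ≠ 0 := by
    apply mul_ne_zero
    · intro h; apply hne1; linarith
    · intro h; apply hne2; linarith
  simp only [hf]; rw [key]
  rw [div_mul_div_comm, mul_one, div_eq_iff (mul_ne_zero hx0 hx12)]
  field_simp
  ring
end

section
/- For every natural number n, the limit as x tends to 0 of (-1)^(n+1)/(n! · x) + Γ(-n + x) equals ((-1)^(n+1)/n!) · (γ - H_n), where H_n = ∑_{k=1}^n 1/k is the n-th harmonic number (H_0 = 0). -/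
open Finset Real Filter

lemma aux_prod (n : ℕ) : ∏ j ∈ Finset.range n, ((0:ℝ) - (j+1)) = (-1)^n * n.factorial := by
  induction n with
  | zero => simp
  | succ n ih =>
    rw [Finset.prod_range_succ, ih, Nat.factorial_succ]
    push_cast
    ring

lemma aux_gamma_rec (n : ℕ) (x : ℝ) (hx : ∀ j : ℕ, j ≤ n → x - j ≠ 0) :
    Real.Gamma (x + 1) = (∏ j ∈ Finset.range (n+1), (x - j)) * Real.Gamma (x - n) := by
  induction n with
  | zero =>
    have h0 : x ≠ 0 := by simpa using hx 0 le_rfl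
    simp [Real.Gamma_add_one h0]
  | succ n ih =>
    have h1 : x - ((n:ℝ)+1) ≠ 0 := by
      have := hx (n+1) le_rfl
      push_cast at this
      exact this
    have h2 : Real.Gamma (x - n) = (x - ((n:ℝ)+1)) * Real.Gamma (x - ((n:ℝ)+1)) := by
      have := Real.Gamma_add_one h1
      rw [← this]
      ring_nf
    rw [ih (fun j hj => hx j (hj.trans (Nat.le_succ n))), h2,
      Finset.prod_range_succ (fun j => x - (j:ℝ)) (n+1)]
    push_cast
    ring

theorem stmt_4 (n : ℕ) :
    Filter.Tendsto
      (fun x : ℝ => (-1) ^ (n + 1) / (n.factorial * x) + Real.Gamma (-(n : ℝ) + x))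
      (nhdsWithin 0 {0}ᶜ)
      (nhds ((-1) ^ (n + 1) / n.factorial *
        (Real.eulerMascheroniConstant - (harmonic n : ℝ)))) := by
  set γ := Real.eulerMascheroniConstant
  set P : ℝ → ℝ := fun x => ∏ j ∈ Finset.range n, (x - ((j:ℝ)+1)) with hPdef
  have hP0 : P 0 = (-1)^n * n.factorial := aux_prod n
  have hfact : (n.factorial : ℝ) ≠ 0 := Nat.cast_ne_zero.mpr n.factorial_ne_zero
  have hP0ne : P 0 ≠ 0 := by
    rw [hP0]
    exact mul_ne_zero (pow_ne_zero _ (by norm_num)) hfact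
  -- derivative of P at 0
  have hPd : HasDerivAt P
      (∑ i ∈ Finset.range n, (∏ j ∈ (Finset.range n).erase i, ((0:ℝ) - ((j:ℝ)+1))) • (1:ℝ)) 0 :=
    HasDerivAt.fun_finsetProd (fun i _ => (hasDerivAt_id (0:ℝ)).sub_const _)
  have hH : (harmonic n : ℝ) = ∑ i ∈ Finset.range n, (((i:ℝ)+1))⁻¹ := by
    rw [harmonic]
    push_cast
    rfl
  have hP'0 : (∑ i ∈ Finset.range n, (∏ j ∈ (Finset.range n).erase i, ((0:ℝ) - ((j:ℝ)+1))) • (1:ℝ))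
      = -(P 0) * (harmonic n : ℝ) := by
    have key : ∀ i ∈ Finset.range n,
        (∏ j ∈ (Finset.range n).erase i, ((0:ℝ) - ((j:ℝ)+1))) • (1:ℝ)
          = -(P 0) * (((i:ℝ)+1))⁻¹ := by
      intro i hi
      have hne : (0:ℝ) - ((i:ℝ)+1) ≠ 0 := by
        have : (0:ℝ) < (i:ℝ)+1 := by positivity
        linarith
      have hprod := Finset.prod_erase_mul (Finset.range n) (fun j => (0:ℝ) - ((j:ℝ)+1)) hi
      rw [smul_eq_mul, mul_one, eq_comm]
      have : P 0 = ∏ j ∈ Finset.range n, ((0:ℝ) - ((j:ℝ)+1)) := rfl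
      rw [this, ← hprod]
      field_simp
      ring
    rw [Finset.sum_congr rfl key, ← Finset.mul_sum, hH]
  -- derivative of Gamma (x+1) at 0
  have hG : HasDerivAt (fun x : ℝ => Real.Gamma (x + 1)) (-γ) 0 := by
    have h1 : HasDerivAt (fun x : ℝ => x + 1) 1 0 := by
      simpa using (hasDerivAt_id (0:ℝ)).add_const 1
    have h2 : HasDerivAt Real.Gamma (-γ) ((fun x : ℝ => x + 1) 0) := by
      simpa using Real.hasDerivAt_Gamma_one
    have h3 := h2.comp 0 h1
    rw [mul_one] at h3
    exact h3
  -- derivative of the quotient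
  have hh : HasDerivAt (fun x : ℝ => Real.Gamma (x + 1) / P x)
      ((-1) ^ (n + 1) / n.factorial * (γ - (harmonic n : ℝ))) 0 := by
    have hdiv := hG.div hPd hP0ne
    refine hdiv.congr_deriv ?_
    rw [hP'0, hP0]
    have hG1 : Real.Gamma ((0:ℝ) + 1) = 1 := by simp [Real.Gamma_one]
    rw [hG1]
    have hsq : ((-1:ℝ)^n)^2 = 1 := by
      rw [← pow_mul, mul_comm, pow_mul, neg_one_sq, one_pow]
    rw [mul_pow, hsq, one_mul, pow_succ]
    field_simp
    ring
  have hslope := hasDerivAt_iff_tendsto_slope.mp hh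
  apply hslope.congr'
  filter_upwards [self_mem_nhdsWithin,
    mem_nhdsWithin_of_mem_nhds (Ioo_mem_nhds (by norm_num : (-1:ℝ) < 0) (by norm_num : (0:ℝ) < 1))]
    with x hx0 hx1
  have hxne : x ≠ 0 := hx0
  have hxlt : x < 1 := hx1.2
  have hxgt : -1 < x := hx1.1
  have hxj : ∀ j : ℕ, j ≤ n → x - (j:ℝ) ≠ 0 := by
    intro j hj
    rcases Nat.eq_zero_or_pos j with rfl | hjpos
    · simpa using hxne
    · have : (1:ℝ) ≤ (j:ℝ) := by exact_mod_cast hjpos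
      intro h
      have : x = (j:ℝ) := by linarith [sub_eq_zero.mp h]
      linarith
  have hPxne : P x ≠ 0 := by
    apply Finset.prod_ne_zero_iff.mpr
    intro j _
    have hj0 : (0:ℝ) ≤ (j:ℝ) := Nat.cast_nonneg j
    intro h
    have : x = (j:ℝ)+1 := by linarith [sub_eq_zero.mp h]
    linarith
  have hrec := aux_gamma_rec n x hxj
  have hsplit : (∏ j ∈ Finset.range (n+1), (x - (j:ℝ))) = P x * x := by
    rw [Finset.prod_range_succ' (fun j => x - (j:ℝ)) n]
    push_cast
    rw [sub_zero]
  have hgamma : Real.Gamma (-(n:ℝ) + x) = Real.Gamma (x + 1) / (P x * x) := by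
    rw [neg_add_eq_sub, eq_div_iff (mul_ne_zero hPxne hxne)]
    rw [hrec, hsplit]
    ring
  rw [slope_def_field, hgamma, sub_zero]
  have h00 : Real.Gamma ((0:ℝ) + 1) / P 0 = (-1:ℝ)^n / n.factorial := by
    rw [hP0, zero_add, Real.Gamma_one, one_div, mul_inv, ← inv_pow, inv_neg, inv_one,
      div_eq_mul_inv]
  rw [h00]
  rw [pow_succ]
  field_simp
  ring
end

section
/- The limit as x tends to 0 of (1/x - Γ(x)) / (-1 + x·Γ(-x)) equals -γ/2. -/
open Real Filter Topology

theorem stmt_10 :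
    Filter.Tendsto
      (fun x : ℝ => (1 / x - Real.Gamma x) / (-1 + x * Real.Gamma (-x)))
      (nhdsWithin 0 {0}ᶜ) (nhds (-Real.eulerMascheroniConstant / 2)) := by
  have hd : HasDerivAt (fun x : ℝ => Real.Gamma (x + 1)) (-eulerMascheroniConstant) 0 := by
    simpa [Function.comp_def] using ((show HasDerivAt Real.Gamma (-eulerMascheroniConstant) (id (0:ℝ) + 1) by
      simpa using Real.hasDerivAt_Gamma_one).comp 0 ((hasDerivAt_id (0:ℝ)).add_const 1))
  have h1 : Tendsto (fun x : ℝ => (Real.Gamma (x + 1) - 1) / x) (𝓝[≠] (0:ℝ))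
      (𝓝 (-eulerMascheroniConstant)) := by
    have := (hasDerivAt_iff_tendsto_slope).mp hd
    simp only [slope_fun_def_field] at this
    simpa [Real.Gamma_one] using this
  have hnum : Tendsto (fun x : ℝ => 1 / x - Real.Gamma x) (𝓝[≠] (0:ℝ))
      (𝓝 eulerMascheroniConstant) := by
    have := h1.neg
    rw [neg_neg] at this
    refine this.congr' ?_
    filter_upwards [self_mem_nhdsWithin] with x hx
    have hx0 : x ≠ 0 := hx
    have : Real.Gamma (x + 1) = x * Real.Gamma x := Real.Gamma_add_one hx0
    field_simp [this]
    rw [this]; ring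
  have hden : Tendsto (fun x : ℝ => -1 + x * Real.Gamma (-x)) (𝓝[≠] (0:ℝ)) (𝓝 (-2)) := by
    have hc : Tendsto (fun x : ℝ => -1 - Real.Gamma (1 - x)) (𝓝 (0:ℝ)) (𝓝 (-2)) := by
      have hg : ContinuousAt Real.Gamma 1 := Real.hasDerivAt_Gamma_one.continuousAt
      have : Tendsto (fun x : ℝ => Real.Gamma (1 - x)) (𝓝 0) (𝓝 1) := by
        have h2 : Tendsto (fun x : ℝ => 1 - x) (𝓝 (0:ℝ)) (𝓝 1) := by
          simpa using (tendsto_const_nhds.sub tendsto_id : Tendsto (fun x:ℝ => 1 - x) (𝓝 0) (𝓝 (1-0)))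
        simpa [Real.Gamma_one, Function.comp_def] using hg.tendsto.comp h2
      have h3 := tendsto_const_nhds.sub this (f := fun _ : ℝ => (-1:ℝ))
      norm_num at h3
      exact h3
    refine (hc.mono_left nhdsWithin_le_nhds).congr' ?_
    filter_upwards [self_mem_nhdsWithin] with x hx
    have hx0 : (-x : ℝ) ≠ 0 := by simpa using hx
    have := Real.Gamma_add_one hx0
    have h' : Real.Gamma (1 - x) = -x * Real.Gamma (-x) := by
      simpa [sub_eq_add_neg, add_comm] using this
    rw [h']; ring
  have := hnum.div hden (by norm_num)
  have heq : eulerMascheroniConstant / (-2) = -eulerMascheroniConstant / 2 := by ring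
  rwa [heq] at this
end

section
/- For every natural number n ≥ 1, the limit as x tends to 0 of 1/x · [1 + (1/x - Γ(-n + x)) / (-1/x - Γ(-n - x))] equals (-1)^(n+1) · 2/(n! + (-1)^(n+1)) · (γ - H_n). -/
open Real Filter

noncomputable def P (n : ℕ) (x : ℝ) : ℝ := ∏ k ∈ Finset.range n, (x - (k + 1))

lemma P_zero (n : ℕ) : P n 0 = (-1) ^ n * n.factorial := by
  induction n with
  | zero => simp [P]
  | succ n ih =>
    rw [P, Finset.prod_range_succ, ← P, ih, Nat.factorial_succ]
    push_cast
    ring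

lemma P_hasDerivAt (n : ℕ) :
    HasDerivAt (P n) ((-1) ^ (n + 1) * n.factorial * (harmonic n : ℝ)) 0 := by
  induction n with
  | zero =>
    have hP : P 0 = fun _ => (1:ℝ) := by funext x; simp [P]
    rw [hP]; simpa [harmonic] using (hasDerivAt_const (0:ℝ) (1:ℝ))
  | succ n ih =>
    have h2 : HasDerivAt (fun x : ℝ => x - ((n : ℝ) + 1)) 1 0 :=
      (hasDerivAt_id 0).sub_const _
    have := ih.fun_mul h2
    have heq : (fun x => P n x * (x - ((n:ℝ) + 1))) = P (n + 1) := by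
      funext x
      simp only [P, Finset.prod_range_succ]
    rw [heq] at this
    refine this.congr_deriv (Eq.symm ?_)
    rw [P_zero, harmonic_succ, Nat.factorial_succ]
    have hne : ((n : ℝ) + 1) ≠ 0 := by positivity
    push_cast
    field_simp
    ring

lemma Gamma_prod (n : ℕ) (x : ℝ) (hx : ∀ k : ℕ, k ≤ n → x - k ≠ 0) :
    Real.Gamma (x - n) * (x * P n x) = Real.Gamma (x + 1) := by
  induction n with
  | zero =>
    have h0 : x ≠ 0 := by simpa using hx 0 (le_refl 0)
    simp [P, Real.Gamma_add_one h0, mul_comm]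
  | succ n ih =>
    have h1 : x - ((n : ℝ) + 1) ≠ 0 := by
      have := hx (n + 1) (le_refl _)
      push_cast at this
      exact this
    have key : Real.Gamma (x - n) = (x - ((n:ℝ)+1)) * Real.Gamma (x - ((n:ℝ)+1)) := by
      have := Real.Gamma_add_one h1
      rw [show x - ((n:ℝ)+1) + 1 = x - n by ring] at this
      exact this
    have ihx := ih (fun k hk => hx k (hk.trans (Nat.le_succ n)))
    rw [key] at ihx
    rw [← ihx]
    simp only [P, Finset.prod_range_succ]
    push_cast
    ring

noncomputable def g (n : ℕ) (x : ℝ) : ℝ := Real.Gamma (x + 1) / P n x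

lemma g_hasDerivAt (n : ℕ) :
    HasDerivAt (g n) ((-1) ^ n * ((harmonic n : ℝ) - Real.eulerMascheroniConstant) / n.factorial) 0 := by
  have hfac : (0:ℝ) < n.factorial := by exact_mod_cast n.factorial_pos
  have hP0 : P n 0 ≠ 0 := by
    rw [P_zero]
    positivity
  have hG : HasDerivAt (fun x : ℝ => Real.Gamma (x + 1)) (-Real.eulerMascheroniConstant) 0 := by
    have h1 : HasDerivAt Real.Gamma (-Real.eulerMascheroniConstant) ((0:ℝ) + 1) := by
      rw [zero_add]; exact Real.hasDerivAt_Gamma_one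
    exact h1.comp_add_const
  have := hG.fun_div (P_hasDerivAt n) hP0
  refine this.congr_deriv (Eq.symm ?_)
  rw [P_zero]
  rw [show (0:ℝ) + 1 = 1 by ring, Real.Gamma_one]
  rcases Nat.even_or_odd n with h | h
  · rw [h.neg_one_pow, (by simpa using h.add_one : Odd (n+1)).neg_one_pow]
    field_simp
    ring
  · rw [h.neg_one_pow, (by simpa using h.add_one : Even (n+1)).neg_one_pow]
    field_simp
    ring

lemma g_zero (n : ℕ) : g n 0 = (-1) ^ n / n.factorial := by
  rw [g, P_zero, show (0:ℝ) + 1 = 1 by ring, Real.Gamma_one]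
  have hfac : (n.factorial:ℝ) ≠ 0 := by exact_mod_cast n.factorial_ne_zero
  rcases Nat.even_or_odd n with h | h
  · rw [h.neg_one_pow]; field_simp
  · rw [h.neg_one_pow]; field_simp




theorem stmt_11 (n : ℕ) (hn : 1 ≤ n) :
    Filter.Tendsto
      (fun x : ℝ => 1 / x *
        (1 + (1 / x - Real.Gamma (-(n : ℝ) + x)) / (-1 / x - Real.Gamma (-(n : ℝ) - x))))
      (nhdsWithin 0 {0}ᶜ)
      (nhds ((-1) ^ (n + 1) * (2 / (n.factorial + (-1 : ℝ) ^ (n + 1))) *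
        (Real.eulerMascheroniConstant - (harmonic n : ℝ)))) := by
  set γ := Real.eulerMascheroniConstant
  set A : ℝ := (-1) ^ n * ((harmonic n : ℝ) - γ) / n.factorial with hA
  set g0 : ℝ := (-1) ^ n / n.factorial with hg0
  have hfac1 : (1:ℝ) ≤ n.factorial := by exact_mod_cast n.factorial_pos
  have hfacne : (n.factorial : ℝ) ≠ 0 := by linarith
  -- nonzeroness of (-1)^n - n!
  have hne : ((-1:ℝ) ^ n - n.factorial) ≠ 0 := by
    rcases Nat.even_or_odd n with h | h
    · have h2 : 2 ≤ n := by
        rw [Nat.even_iff] at h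
        omega
      have : (2:ℝ) ≤ n.factorial := by
        exact_mod_cast le_trans h2 (Nat.self_le_factorial n)
      rw [h.neg_one_pow]
      linarith
    · rw [h.neg_one_pow]
      linarith
  have hg0ne : g0 - 1 ≠ 0 := by
    rw [hg0]
    rw [div_sub' hfacne]
    exact div_ne_zero (by simpa using hne) hfacne
  -- neg tendsto
  have hneg : Filter.Tendsto (fun x : ℝ => -x) (nhdsWithin 0 {0}ᶜ) (nhdsWithin 0 {0}ᶜ) := by
    apply tendsto_nhdsWithin_of_tendsto_nhds_of_eventually_within
    · exact (continuous_neg.tendsto' (0:ℝ) 0 (by simp)).mono_left nhdsWithin_le_nhds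
    · filter_upwards [self_mem_nhdsWithin] with x hx
      simpa using hx
  have hnegnhds : Filter.Tendsto (fun x : ℝ => -x) (nhdsWithin 0 {0}ᶜ) (nhds 0) :=
    hneg.mono_right nhdsWithin_le_nhds
  -- slope tendsto
  have hslope : Filter.Tendsto (fun x : ℝ => (g n x - g n 0) / x)
      (nhdsWithin 0 {0}ᶜ) (nhds A) := by
    have := hasDerivAt_iff_tendsto_slope.mp (g_hasDerivAt n)
    rw [hA]
    apply this.congr
    intro x
    simp [slope_def_field, div_eq_mul_inv, mul_comm]
  have hslope_neg : Filter.Tendsto (fun x : ℝ => (g n (-x) - g n 0) / (-x))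
      (nhdsWithin 0 {0}ᶜ) (nhds A) := hslope.comp hneg
  have hnum : Filter.Tendsto (fun x : ℝ => (g n (-x) - g n x) / x)
      (nhdsWithin 0 {0}ᶜ) (nhds (-A - A)) := by
    apply (hslope_neg.neg.sub hslope).congr
    intro x
    rw [div_neg, neg_neg, div_sub_div_same]
    congr 1
    ring
  have hcont : Filter.Tendsto (fun x : ℝ => g n (-x)) (nhdsWithin 0 {0}ᶜ) (nhds (g n 0)) :=
    (g_hasDerivAt n).continuousAt.tendsto.comp hnegnhds
  have hg00 : g n 0 = g0 := g_zero n
  have hden : Filter.Tendsto (fun x : ℝ => g n (-x) - 1) (nhdsWithin 0 {0}ᶜ) (nhds (g0 - 1)) := by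
    rw [← hg00]
    exact hcont.sub_const 1
  have hmain := hnum.div hden hg0ne
  -- eventual equality
  have hev1 : ∀ᶠ x : ℝ in nhdsWithin 0 {0}ᶜ, |x| < 1 := by
    apply eventually_nhdsWithin_of_eventually_nhds
    filter_upwards [Metric.ball_mem_nhds (0:ℝ) one_pos] with x hx
    simpa [Real.dist_eq] using hx
  have hev2 : ∀ᶠ x : ℝ in nhdsWithin 0 {0}ᶜ, g n (-x) - 1 ≠ 0 := by
    have : g0 - 1 ≠ 0 := hg0ne
    filter_upwards [hden.eventually_ne this] with x hx
    exact hx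
  have key : ∀ x : ℝ, x ≠ 0 → |x| < 1 → g n (-x) - 1 ≠ 0 →
      1 / x * (1 + (1 / x - Real.Gamma (-(n : ℝ) + x)) / (-1 / x - Real.Gamma (-(n : ℝ) - x)))
        = ((g n (-x) - g n x) / x) / (g n (-x) - 1) := by
    intro x hx hx1 hg1
    have hcond : ∀ y : ℝ, y ≠ 0 → |y| < 1 → ∀ k : ℕ, k ≤ n → y - k ≠ 0 := by
      intro y hy hy1 k _
      rcases Nat.eq_zero_or_pos k with rfl | hk
      · simpa using hy
      · have : (1:ℝ) ≤ k := by exact_mod_cast hk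
        have : y < (k:ℝ) := lt_of_le_of_lt (le_abs_self y) (lt_of_lt_of_le hy1 this)
        exact sub_ne_zero_of_ne (ne_of_lt this)
    have hPne : ∀ y : ℝ, |y| < 1 → P n y ≠ 0 := by
      intro y hy1
      rw [P]
      apply Finset.prod_ne_zero_iff.mpr
      intro k _
      have : (1:ℝ) ≤ (k:ℝ) + 1 := by
        have : (0:ℝ) ≤ (k:ℝ) := Nat.cast_nonneg k
        linarith
      have : y < (k:ℝ) + 1 := lt_of_le_of_lt (le_abs_self y) (lt_of_lt_of_le hy1 this)
      exact sub_ne_zero_of_ne (ne_of_lt this)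
    have hxneg : (-x) ≠ 0 := neg_ne_zero.mpr hx
    have hx1neg : |(-x)| < 1 := by rwa [abs_neg]
    have hGp : Real.Gamma (-(n : ℝ) + x) = g n x / x := by
      have := Gamma_prod n x (hcond x hx hx1)
      rw [show -(n:ℝ) + x = x - n by ring]
      rw [g]
      field_simp [hPne x hx1] at this ⊢
      linarith [this]
    have hGm : Real.Gamma (-(n : ℝ) - x) = g n (-x) / (-x) := by
      have := Gamma_prod n (-x) (hcond (-x) hxneg hx1neg)
      rw [show -(n:ℝ) - x = (-x) - n by ring]
      rw [g]
      field_simp [hPne (-x) hx1neg] at this ⊢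
      linarith [this]
    rw [hGp, hGm]
    have hb : -1 / x - g n (-x) / (-x) = (g n (-x) - 1) / x := by
      field_simp
      ring
    rw [hb]
    field_simp
    try ring
  have heq : ∀ᶠ x : ℝ in nhdsWithin 0 {0}ᶜ,
      ((g n (-x) - g n x) / x) / (g n (-x) - 1)
        = 1 / x * (1 + (1 / x - Real.Gamma (-(n : ℝ) + x)) / (-1 / x - Real.Gamma (-(n : ℝ) - x))) := by
    filter_upwards [self_mem_nhdsWithin, hev1, hev2] with x hx hx1 hg1
    exact (key x (by simpa using hx) hx1 hg1).symm
  have hfinal := hmain.congr' heq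
  convert hfinal using 2
  rw [hA, hg0]
  rcases Nat.even_or_odd n with h | h
  · have he : ((-1:ℝ)) ^ n = 1 := h.neg_one_pow
    have ho : ((-1:ℝ)) ^ (n+1) = -1 := (by simpa using h.add_one : Odd (n+1)).neg_one_pow
    rw [he] at hne
    have hne' : (n.factorial : ℝ) + (-1:ℝ) ≠ 0 := fun hc => hne (by linarith)
    rw [he, ho]
    field_simp [hne']
    ring
  · have he : ((-1:ℝ)) ^ n = -1 := h.neg_one_pow
    have ho : ((-1:ℝ)) ^ (n+1) = 1 := (by simpa using h.add_one : Even (n+1)).neg_one_pow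
    rw [he] at hne
    have hne' : (n.factorial : ℝ) + 1 ≠ 0 := by linarith
    rw [he, ho]
    field_simp [hne']
    ring
end

section
/- For every natural number n, the function x ↦ Γ(-n + x) - (-1)^n/(n! x) extends continuously to x = 0, with value at 0 equal to ((-1)^n/n!) · (H_n - γ). -/
open Finset

lemma gamma_rec (n : ℕ) (x : ℝ) (hx : x ≠ 0) :
    Real.Gamma (x - n) =
      Real.Gamma (x + 1) / (x * ∏ k ∈ Finset.range n, (x - (k + 1))) := by
  induction n with
  | zero =>
      simp only [Nat.cast_zero, sub_zero, Finset.range_zero, Finset.prod_empty, mul_one]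
      rw [Real.Gamma_add_one hx, mul_comm, mul_div_assoc, div_self hx, mul_one]
  | succ n ih =>
      rw [Finset.prod_range_succ]
      by_cases hc : x - (n + 1 : ℕ) = 0
      · have h1 : x - ((n : ℝ) + 1) = 0 := by push_cast at hc ⊢; linarith
        rw [hc, Real.Gamma_zero, h1, mul_zero, mul_zero, div_zero]
      · have h1 : x - ((n : ℝ) + 1) ≠ 0 := by push_cast at hc ⊢; exact hc
        have key : Real.Gamma (x - (n + 1 : ℕ)) = Real.Gamma (x - n) / (x - ((n : ℝ) + 1)) := by
          have h3 := Real.Gamma_add_one h1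
          have h2 : x - ((n : ℝ) + 1) + 1 = x - n := by ring
          rw [h2] at h3
          field_simp [h3]
          push_cast; rw [h3]; ring
        rw [key, ih, div_div, mul_assoc]

theorem stmt_13 (n : ℕ) :
    ∃ g : ℝ → ℝ, ContinuousAt g 0 ∧
      g 0 = (-1) ^ n / (n.factorial : ℝ) * ((harmonic n : ℝ) - Real.eulerMascheroniConstant) ∧
      ∀ x : ℝ, x ≠ 0 →
        g x = Real.Gamma (-(n : ℝ) + x) - (-1) ^ n / (n.factorial * x) := by
  classical
  set P : ℝ → ℝ := fun x => ∏ k ∈ Finset.range n, (x - (k + 1)) with hPdef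
  set F : ℝ → ℝ := fun x => Real.Gamma (x + 1) / P x with hFdef
  set V : ℝ := (-1) ^ n / (n.factorial : ℝ) * ((harmonic n : ℝ) - Real.eulerMascheroniConstant)
    with hV
  have hfac : (n.factorial : ℝ) ≠ 0 := Nat.cast_ne_zero.mpr n.factorial_ne_zero
  have hsgn : (-1 : ℝ) ^ n = 1 ∨ (-1 : ℝ) ^ n = -1 := by
    rcases Nat.even_or_odd n with h | h
    · exact Or.inl h.neg_one_pow
    · exact Or.inr h.neg_one_pow
  -- P 0 = (-1)^n * n!
  have hP0 : P 0 = (-1) ^ n * (n.factorial : ℝ) := by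
    have h1 : P 0 = ∏ k ∈ Finset.range n, ((-1 : ℝ) * ((k : ℝ) + 1)) :=
      Finset.prod_congr rfl (fun k _ => by ring)
    rw [h1, Finset.prod_mul_distrib, Finset.prod_const, Finset.card_range]
    congr 1
    rw [show (∏ k ∈ Finset.range n, ((k : ℝ) + 1)) = ((∏ k ∈ Finset.range n, (k + 1) : ℕ) : ℝ)
      from by push_cast; rfl, Finset.prod_range_add_one_eq_factorial]
  have hP0ne : P 0 ≠ 0 := by
    rcases hsgn with h | h <;> rw [hP0, h] <;> simpa using hfac
  -- harmonic sum
  have hH : (harmonic n : ℝ) = ∑ i ∈ Finset.range n, ((i : ℝ) + 1)⁻¹ := by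
    rw [harmonic]
    push_cast
    rfl
  -- derivative of P at 0
  have hP' : HasDerivAt P (-(P 0 * (harmonic n : ℝ))) 0 := by
    have h := HasDerivAt.finset_prod (u := Finset.range n)
      (f := fun k (x : ℝ) => x - ((k : ℝ) + 1)) (f' := fun _ => 1) (x := (0 : ℝ))
      (fun i _ => (hasDerivAt_id 0).sub_const _)
    have heq : (∑ i ∈ Finset.range n,
        (∏ j ∈ (Finset.range n).erase i, ((0 : ℝ) - ((j : ℝ) + 1))) • (1 : ℝ))
        = -(P 0 * (harmonic n : ℝ)) := by
      rw [hH, Finset.mul_sum, ← Finset.sum_neg_distrib]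
      apply Finset.sum_congr rfl
      intro i hi
      have hfi : (0 : ℝ) - ((i : ℝ) + 1) ≠ 0 := by
        have : (0 : ℝ) < (i : ℝ) + 1 := by positivity
        linarith
      have hpe := Finset.prod_erase_mul (Finset.range n)
        (fun j => (0 : ℝ) - ((j : ℝ) + 1)) hi
      have h2 : (∏ j ∈ (Finset.range n).erase i, ((0 : ℝ) - ((j : ℝ) + 1)))
          = P 0 / ((0 : ℝ) - ((i : ℝ) + 1)) := by
        rw [eq_div_iff hfi]
        simpa [hPdef] using hpe
      rw [smul_eq_mul, mul_one, h2, zero_sub, div_neg, div_eq_mul_inv]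
    rw [← heq]
    have hPe : P = ∏ i ∈ Finset.range n, fun x : ℝ => x - ((i : ℝ) + 1) := by
      ext x; simp [hPdef, Finset.prod_apply]
    rw [hPe]; exact h
  -- derivative of Gamma (x+1) at 0
  have hG : HasDerivAt (fun x : ℝ => Real.Gamma (x + 1))
      (-Real.eulerMascheroniConstant) 0 := by
    have h1 : HasDerivAt (fun x : ℝ => x + 1) 1 0 := (hasDerivAt_id 0).add_const 1
    have h2 : HasDerivAt Real.Gamma (-Real.eulerMascheroniConstant) ((0 : ℝ) + 1) := by
      rw [zero_add]; exact Real.hasDerivAt_Gamma_one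
    have h3 := h2.comp 0 h1
    rw [mul_one] at h3
    exact h3
  -- derivative of F at 0
  have hF : HasDerivAt F V 0 := by
    have h := hG.div hP' hP0ne
    have heq : (-Real.eulerMascheroniConstant * P 0 -
        Real.Gamma (0 + 1) * -(P 0 * (harmonic n : ℝ))) / P 0 ^ 2 = V := by
      rw [zero_add, Real.Gamma_one, hV, hP0]
      rcases hsgn with h' | h' <;> rw [h'] <;> field_simp <;> ring
    rw [← heq]
    exact h
  refine ⟨Function.update (slope F 0) 0 V, ?_, ?_, ?_⟩
  · rw [continuousAt_update_same]
    exact hasDerivAt_iff_tendsto_slope.mp hF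
  · simp
  · intro x hx
    rw [Function.update_of_ne hx, slope_def_field]
    have hFx : F x / x = Real.Gamma (-(n : ℝ) + x) := by
      have heq : -(n : ℝ) + x = x - n := by ring
      rw [heq, gamma_rec n x hx, hFdef]
      simp only
      rw [div_div, mul_comm]
    have hF0 : F 0 = (-1) ^ n / (n.factorial : ℝ) := by
      rw [hFdef]
      simp only [zero_add, Real.Gamma_one, hP0]
      rcases hsgn with h' | h' <;> rw [h'] <;> field_simp
    rw [sub_zero, sub_div, hFx, hF0, div_div]
end

section
/- The limit as x tends to 0 of (1/x - Γ(x)) + (1/x + Γ(-1 + x)) equals 2γ - 1. -/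
open Real Filter

theorem stmt_15 :
    Filter.Tendsto
      (fun x : ℝ => (1 / x - Real.Gamma x) + (1 / x + Real.Gamma (-1 + x)))
      (nhdsWithin 0 {0}ᶜ)
      (nhds (2 * Real.eulerMascheroniConstant - 1)) := by
  set γ := Real.eulerMascheroniConstant
  have hF : HasDerivAt (fun x : ℝ => Real.Gamma (x + 1)) (-γ) 0 := by
    have h1 : HasDerivAt (fun x : ℝ => x + 1) 1 0 := by
      simpa using (hasDerivAt_id (0:ℝ)).add_const 1
    have hG1 : HasDerivAt Real.Gamma (-γ) ((fun x : ℝ => x + 1) 0) := by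
      simpa using Real.hasDerivAt_Gamma_one
    have h2 := hG1.comp 0 h1; rw [mul_one] at h2; exact h2
  have hs : Tendsto (fun x : ℝ => (Real.Gamma (x + 1) - 1) / x) (nhdsWithin 0 {0}ᶜ)
      (nhds (-γ)) := by
    have h := (hasDerivAt_iff_tendsto_slope).mp hF
    refine h.congr fun x => ?_
    simp [slope_def_field, Real.Gamma_one]
  set s : ℝ → ℝ := fun x => (Real.Gamma (x + 1) - 1) / x with hs_def
  have hlim : Tendsto (fun x : ℝ => -s x + (s x + 1) / (x - 1)) (nhdsWithin 0 {0}ᶜ)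
      (nhds (2 * γ - 1)) := by
    have hx : Tendsto (fun x : ℝ => x) (nhdsWithin 0 {0}ᶜ) (nhds 0) :=
      tendsto_id.mono_left nhdsWithin_le_nhds
    have h2 : Tendsto (fun x : ℝ => (s x + 1) / (x - 1)) (nhdsWithin 0 {0}ᶜ)
        (nhds ((-γ + 1) / (0 - 1))) :=
      (hs.add_const 1).div (hx.sub_const 1) (by norm_num)
    have := (hs.neg).add h2
    convert this using 1
    ring
  refine hlim.congr' ?_
  filter_upwards [self_mem_nhdsWithin,
    eventually_nhdsWithin_of_eventually_nhds (eventually_ne_nhds (show (0:ℝ) ≠ 1 by norm_num))]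
    with x hx0 hx1
  have hx0' : x ≠ 0 := hx0
  have hx1' : x - 1 ≠ 0 := sub_ne_zero.mpr hx1
  have hG : Real.Gamma (x + 1) = x * Real.Gamma x := Real.Gamma_add_one hx0'
  have hG' : Real.Gamma x = (x - 1) * Real.Gamma (x - 1) := by
    have h := Real.Gamma_add_one hx1'
    rw [sub_add_cancel] at h
    exact h
  have hGx : Real.Gamma x = Real.Gamma (x + 1) / x := by rw [hG]; field_simp
  have hGm : Real.Gamma (-1 + x) = Real.Gamma (x + 1) / (x * (x - 1)) := by
    rw [show (-1 : ℝ) + x = x - 1 by ring]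
    have : Real.Gamma (x - 1) = Real.Gamma x / (x - 1) := by rw [hG']; field_simp
    rw [this, hGx]
    field_simp
  rw [hGx, hGm, hs_def]
  field_simp
  ring
end

section
/- For every natural number n ≥ 1, the limit as x tends to 0 of (Γ(-n + x) + Γ(-n - x)) equals 2·((-1)^(n+1)/n!)·(γ - H_n). -/
open Filter Real Finset Topology

lemma gamma_shift (m : ℕ) (x : ℝ) (hx : ∀ k : ℕ, k ≤ m → x - k ≠ 0) :
    Real.Gamma (x + 1) = (∏ k ∈ Finset.range (m + 1), (x - k)) * Real.Gamma (x - m) := by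
  induction m with
  | zero =>
      have h0 : x ≠ 0 := by simpa using hx 0 le_rfl
      rw [Finset.prod_range_one]
      norm_num
      exact Real.Gamma_add_one h0
  | succ m ih =>
      have h1 : x - (m + 1 : ℕ) ≠ 0 := hx (m + 1) le_rfl
      have ih' := ih (fun k hk => hx k (hk.trans (Nat.le_succ m)))
      have key : Real.Gamma (x - m) = (x - (m + 1 : ℕ)) * Real.Gamma (x - (m + 1 : ℕ)) := by
        have := Real.Gamma_add_one h1
        rw [show x - (m + 1 : ℕ) + 1 = x - m by push_cast; ring] at this
        exact this
      rw [ih', key]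
      conv_rhs => rw [Finset.prod_range_succ]
      ring

lemma prod_succ_fact (n : ℕ) : ∏ k ∈ Finset.range n, ((k : ℝ) + 1) = n.factorial := by
  induction n with
  | zero => simp
  | succ n ih =>
      rw [Finset.prod_range_succ, ih, Nat.factorial_succ]
      push_cast; ring

theorem stmt_17 (n : ℕ) (hn : 1 ≤ n) :
    Filter.Tendsto
      (fun x : ℝ => Real.Gamma (-(n : ℝ) + x) + Real.Gamma (-(n : ℝ) - x))
      (nhdsWithin 0 {0}ᶜ)
      (nhds (2 * ((-1) ^ (n + 1) / (n.factorial : ℝ)) *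
        (Real.eulerMascheroniConstant - (harmonic n : ℝ)))) := by
  set γ := Real.eulerMascheroniConstant
  set Q : ℝ → ℝ := fun x => ∏ k ∈ Finset.range n, (x - ((k : ℝ) + 1)) with hQdef
  set H : ℝ := ∑ i ∈ Finset.range n, ((i : ℝ) + 1)⁻¹ with hHdef
  have hQ0 : Q 0 = (-1) ^ n * n.factorial := by
    simp only [hQdef, zero_sub]
    rw [show (∏ k ∈ Finset.range n, -((k : ℝ) + 1)) =
        ∏ k ∈ Finset.range n, (-1) * ((k : ℝ) + 1) by simp [neg_mul],
      Finset.prod_mul_distrib, Finset.prod_const, prod_succ_fact, Finset.card_range]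
  have hfact : (n.factorial : ℝ) ≠ 0 := Nat.cast_ne_zero.mpr n.factorial_ne_zero
  have hQ0ne : Q 0 ≠ 0 := by
    rw [hQ0]; positivity
  -- derivative of Q at 0
  have hQderiv : HasDerivAt Q
      (∑ i ∈ Finset.range n, (∏ j ∈ (Finset.range n).erase i, ((0:ℝ) - ((j:ℝ)+1))) • (1:ℝ)) 0 := by
    exact HasDerivAt.fun_finsetProd (fun i _ => (hasDerivAt_id (0:ℝ)).sub_const _)
  have hS : (∑ i ∈ Finset.range n, (∏ j ∈ (Finset.range n).erase i, ((0:ℝ) - ((j:ℝ)+1))) • (1:ℝ))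
      = -(Q 0) * H := by
    have step : ∀ i ∈ Finset.range n,
        (∏ j ∈ (Finset.range n).erase i, ((0:ℝ) - ((j:ℝ)+1))) • (1:ℝ)
        = -(Q 0) * ((i : ℝ) + 1)⁻¹ := by
      intro i hi
      have hfi : (0:ℝ) - ((i:ℝ)+1) ≠ 0 := by
        have : (0:ℝ) < (i:ℝ) + 1 := by positivity
        intro h; rw [sub_eq_zero] at h; linarith
      have hmul := Finset.prod_erase_mul (Finset.range n) (fun j => (0:ℝ) - ((j:ℝ)+1)) hi
      have hmul' : (∏ j ∈ (Finset.range n).erase i, ((0:ℝ) - ((j:ℝ)+1))) * ((0:ℝ) - ((i:ℝ)+1))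
          = Q 0 := by simpa [hQdef] using hmul
      have hprod : (∏ j ∈ (Finset.range n).erase i, ((0:ℝ) - ((j:ℝ)+1)))
          = Q 0 / ((0:ℝ) - ((i:ℝ)+1)) := (eq_div_iff hfi).mpr hmul'
      have hi1 : ((i:ℝ) + 1) ≠ 0 := by positivity
      rw [smul_eq_mul, mul_one, hprod]
      rw [show (0:ℝ) - ((i:ℝ)+1) = -((i:ℝ)+1) by ring, div_neg, div_eq_mul_inv, ← neg_mul]
    rw [Finset.sum_congr rfl step, ← Finset.mul_sum, hHdef]
  have hH : H = (harmonic n : ℝ) := by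
    rw [hHdef, harmonic]
    push_cast
    rfl
  -- derivative of numerator
  have hGam : HasDerivAt (fun x : ℝ => Real.Gamma (x + 1)) (-γ) 0 := by
    have h1 : HasDerivAt Real.Gamma (-γ) ((fun x : ℝ => x + 1) 0) := by
      simpa using Real.hasDerivAt_Gamma_one
    have := h1.comp 0 ((hasDerivAt_id (0:ℝ)).add_const 1); rw [mul_one] at this; exact this
  -- derivative of h := Γ(x+1)/Q x
  set h : ℝ → ℝ := fun x => Real.Gamma (x + 1) / Q x with hhdef
  have hh0 : HasDerivAt h ((-γ * Q 0 - Real.Gamma (0 + 1) *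
      (∑ i ∈ Finset.range n, (∏ j ∈ (Finset.range n).erase i, ((0:ℝ) - ((j:ℝ)+1))) • (1:ℝ)))
      / Q 0 ^ 2) 0 := hGam.div hQderiv hQ0ne
  set d : ℝ := ((harmonic n : ℝ) - γ) / Q 0 with hddef
  have hh : HasDerivAt h d 0 := by
    convert hh0 using 1
    rw [hS, hddef, ← hH]
    rw [show (0:ℝ) + 1 = 1 by ring, Real.Gamma_one]
    field_simp
    ring
  -- slope limits
  have t1 : Tendsto (fun x : ℝ => (h x - h 0) / x) (𝓝[≠] (0:ℝ)) (𝓝 d) := by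
    have := hasDerivAt_iff_tendsto_slope.mp hh
    refine this.congr fun x => ?_
    simp [slope_def_field, div_eq_inv_mul]
  have hneg : Tendsto (fun x : ℝ => -x) (𝓝[≠] (0:ℝ)) (𝓝[≠] (0:ℝ)) := by
    rw [tendsto_nhdsWithin_iff]
    constructor
    · exact (continuous_neg.tendsto' 0 0 (by simp)).mono_left nhdsWithin_le_nhds
    · filter_upwards [self_mem_nhdsWithin] with x hx
      simpa using hx
  have t2 : Tendsto (fun x : ℝ => (h (-x) - h 0) / x) (𝓝[≠] (0:ℝ)) (𝓝 (-d)) := by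
    have := (t1.comp hneg).neg
    refine this.congr fun x => ?_
    simp only [Function.comp]
    rw [div_neg, neg_neg]
  have t3 : Tendsto (fun x : ℝ => (h x - h (-x)) / x) (𝓝[≠] (0:ℝ)) (𝓝 (d - -d)) := by
    refine (t1.sub t2).congr fun x => ?_
    rw [div_sub_div_same]
    congr 1
    ring
  -- identify the limit value
  have hval : d - -d = 2 * ((-1) ^ (n + 1) / (n.factorial : ℝ)) *
      (γ - (harmonic n : ℝ)) := by
    rw [hddef, hQ0, pow_succ]
    have h1 : ((-1:ℝ)) ^ n ≠ 0 := by positivity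
    have h2 : (((-1:ℝ)) ^ n) ^ 2 = 1 := by
      rw [← pow_mul, mul_comm, pow_mul]; norm_num
    field_simp
    linear_combination (2*(γ - (harmonic n : ℝ))) * h2
  rw [← hval]
  -- eventual equality
  refine t3.congr' ?_
  have hev : ∀ᶠ x in 𝓝[≠] (0:ℝ), |x| < 1 ∧ x ≠ 0 := by
    have h1 : ∀ᶠ x in 𝓝 (0:ℝ), |x| < 1 := by
      have := Metric.ball_mem_nhds (0:ℝ) one_pos
      filter_upwards [this] with x hx
      simpa [Real.dist_eq] using hx
    exact (h1.filter_mono nhdsWithin_le_nhds).and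
      (by filter_upwards [self_mem_nhdsWithin] with x hx; simpa using hx)
  filter_upwards [hev] with x ⟨hx1, hx0⟩
  have hxk : ∀ y : ℝ, |y| < 1 → y ≠ 0 → ∀ k : ℕ, k ≤ n → y - k ≠ 0 := by
    intro y hy1 hy0 k _
    match k with
    | 0 => simpa using hy0
    | k + 1 =>
      intro hcon
      rw [sub_eq_zero] at hcon
      have : (1:ℝ) ≤ ((k + 1 : ℕ) : ℝ) := by exact_mod_cast Nat.one_le_iff_ne_zero.mpr (by omega)
      have := abs_lt.mp hy1
      rw [hcon] at this
      linarith [this.2]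
  have key : ∀ y : ℝ, |y| < 1 → y ≠ 0 → h y = y * Real.Gamma (y - n) := by
    intro y hy1 hy0
    have hQy : Q y ≠ 0 := by
      rw [hQdef]
      apply Finset.prod_ne_zero_iff.mpr
      intro k hk
      have := hxk y hy1 hy0 (k + 1) (by simpa using Finset.mem_range.mp hk)
      push_cast at this ⊢
      convert this using 1
    have hshift := gamma_shift n y (hxk y hy1 hy0)
    have hsplit : (∏ k ∈ Finset.range (n + 1), (y - (k:ℝ))) = Q y * y := by
      rw [Finset.prod_range_succ']
      push_cast
      simp [hQdef]
    rw [hsplit] at hshift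
    rw [hhdef]
    field_simp
    rw [hshift]
    ring
  have e1 : h x = x * Real.Gamma (x - n) := key x hx1 hx0
  have e2 : h (-x) = -x * Real.Gamma (-x - n) := key (-x) (by simpa using hx1) (neg_ne_zero.mpr hx0)
  rw [e1, e2]
  rw [show -(n:ℝ) + x = x - n by ring, show -(n:ℝ) - x = -x - n by ring]
  field_simp
  ring
end
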